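/- Let ψ : ℝ → ℝ be an increasing homeomorphism of ℝ (e.g. ψ = (Φ')⁻¹ for Φ as in the boundary value problem) and fix A, B ∈ ℝ. Then for every continuous function v : [0,1] → ℝ there exists a unique constant c(v) ∈ ℝ such that A + ∫₀¹ ψ(∫₀^τ v(s) ds + c(v)) dτ = B; moreover the map v ↦ c(v) is continuous from C([0,1]) (with the supremum norm) to ℝ. -/
import Mathlib


open Set Filter Topology MeasureTheory

/-- The extension of a continuous function on `[0,1]` to all of `ℝ`
obtained by projecting onto `[0,1]`. -/
noncomputable def extIcc (v : C(Set.Icc (0:ℝ) 1, ℝ)) : ℝ → ℝ :=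
  fun s => v (Set.projIcc 0 1 zero_le_one s)

lemma extIcc_cont_pair :
    Continuous (fun p : C(Set.Icc (0:ℝ) 1, ℝ) × ℝ => extIcc p.1 p.2) := by
  exact ContinuousEval.continuous_eval.comp
    (continuous_fst.prodMk ((continuous_projIcc (h := zero_le_one)).comp continuous_snd))

lemma extIcc_cont (v : C(Set.Icc (0:ℝ) 1, ℝ)) : Continuous (extIcc v) :=
  v.continuous.comp continuous_projIcc

lemma extIcc_bound (v : C(Set.Icc (0:ℝ) 1, ℝ)) (s : ℝ) : ‖extIcc v s‖ ≤ ‖v‖ :=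
  v.norm_coe_le_norm _

/-- The primitive `G(v, τ) = ∫₀^τ v`. -/
noncomputable def GD (v : C(Set.Icc (0:ℝ) 1, ℝ)) (τ : ℝ) : ℝ :=
  ∫ s in (0:ℝ)..τ, extIcc v s

lemma GD_cont_pair : Continuous (fun p : C(Set.Icc (0:ℝ) 1, ℝ) × ℝ => GD p.1 p.2) :=
  intervalIntegral.continuous_parametric_primitive_of_continuous (μ := MeasureTheory.volume) extIcc_cont_pair

lemma GD_cont (v : C(Set.Icc (0:ℝ) 1, ℝ)) : Continuous (GD v) :=
  intervalIntegral.continuous_primitive (fun a b => (extIcc_cont v).intervalIntegrable a b) 0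

lemma GD_bound (v : C(Set.Icc (0:ℝ) 1, ℝ)) {τ : ℝ} (hτ : τ ∈ Set.Icc (0:ℝ) 1) :
    |GD v τ| ≤ ‖v‖ := by
  have h := intervalIntegral.norm_integral_le_of_norm_le_const
    (C := ‖v‖) (f := extIcc v) (a := 0) (b := τ) (fun x _ => extIcc_bound v x)
  rw [Real.norm_eq_abs] at h
  calc |GD v τ| ≤ ‖v‖ * |τ - 0| := h
    _ ≤ ‖v‖ * 1 := by
        have : |τ - 0| ≤ 1 := by
          rw [sub_zero, abs_of_nonneg hτ.1]; exact hτ.2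
        exact mul_le_mul_of_nonneg_left this (norm_nonneg v)
    _ = ‖v‖ := mul_one _

/-- The map `Φ(v, c) = ∫₀¹ ψ(G(v,τ) + c) dτ`. -/
noncomputable def PhiD (ψ : ℝ → ℝ) (p : C(Set.Icc (0:ℝ) 1, ℝ) × ℝ) : ℝ :=
  ∫ τ in (0:ℝ)..1, ψ (GD p.1 τ + p.2)

lemma PhiD_cont {ψ : ℝ → ℝ} (hcont : Continuous ψ) : Continuous (PhiD ψ) := by
  have h : Continuous (Function.uncurry
      (fun (p : C(Set.Icc (0:ℝ) 1, ℝ) × ℝ) (τ : ℝ) => ψ (GD p.1 τ + p.2))) := by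
    apply hcont.comp
    exact ((GD_cont_pair.comp ((continuous_fst.fst).prodMk continuous_snd)).add
      (continuous_fst.snd))
  exact intervalIntegral.continuous_parametric_intervalIntegral_of_continuous' h 0 1

lemma PhiD_integrand_integrable {ψ : ℝ → ℝ} (hcont : Continuous ψ)
    (v : C(Set.Icc (0:ℝ) 1, ℝ)) (c : ℝ) :
    IntervalIntegrable (fun τ => ψ (GD v τ + c)) MeasureTheory.volume 0 1 :=
  (hcont.comp ((GD_cont v).add continuous_const)).intervalIntegrable _ _

lemma PhiD_strictMono {ψ : ℝ → ℝ} (hmono : StrictMono ψ) (hcont : Continuous ψ)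
    (v : C(Set.Icc (0:ℝ) 1, ℝ)) : StrictMono (fun c => PhiD ψ (v, c)) := by
  intro c c' h
  have h1 := PhiD_integrand_integrable hcont v c
  have h2 := PhiD_integrand_integrable hcont v c'
  have key : 0 < ∫ τ in (0:ℝ)..1, (ψ (GD v τ + c') - ψ (GD v τ + c)) := by
    refine intervalIntegral.intervalIntegral_pos_of_pos (h2.sub h1) ?_ one_pos
    intro x
    exact sub_pos.2 (hmono (by linarith))
  rw [intervalIntegral.integral_sub h2 h1] at key
  simpa [PhiD] using sub_pos.1 key

lemma PhiD_lb {ψ : ℝ → ℝ} (hmono : StrictMono ψ) (hcont : Continuous ψ)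
    (v : C(Set.Icc (0:ℝ) 1, ℝ)) (c : ℝ) : ψ (c - ‖v‖) ≤ PhiD ψ (v, c) := by
  have h := intervalIntegral.integral_mono_on (a := (0:ℝ)) (b := 1)
    (f := fun _ => ψ (c - ‖v‖)) (g := fun τ => ψ (GD v τ + c)) zero_le_one
    (intervalIntegrable_const) (PhiD_integrand_integrable hcont v c)
    (fun τ hτ => hmono.monotone (by
      have := (abs_le.1 (GD_bound v hτ)).1; linarith))
  simpa [PhiD] using h

lemma PhiD_ub {ψ : ℝ → ℝ} (hmono : StrictMono ψ) (hcont : Continuous ψ)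
    (v : C(Set.Icc (0:ℝ) 1, ℝ)) (c : ℝ) : PhiD ψ (v, c) ≤ ψ (c + ‖v‖) := by
  have h := intervalIntegral.integral_mono_on (a := (0:ℝ)) (b := 1)
    (g := fun _ => ψ (c + ‖v‖)) (f := fun τ => ψ (GD v τ + c)) zero_le_one
    (PhiD_integrand_integrable hcont v c) (intervalIntegrable_const)
    (fun τ hτ => hmono.monotone (by
      have := (abs_le.1 (GD_bound v hτ)).2; linarith))
  simpa [PhiD] using h

lemma PhiD_surj {ψ : ℝ → ℝ} (hmono : StrictMono ψ) (hcont : Continuous ψ)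
    (hbij : Function.Bijective ψ) (v : C(Set.Icc (0:ℝ) 1, ℝ)) :
    Function.Surjective (fun c => PhiD ψ (v, c)) := by
  have hψtop : Tendsto ψ atTop atTop :=
    hmono.monotone.tendsto_atTop_atTop (fun b => ⟨(hbij.2 b).choose, ((hbij.2 b).choose_spec).ge⟩)
  have hψbot : Tendsto ψ atBot atBot :=
    hmono.monotone.tendsto_atBot_atBot (fun b => ⟨(hbij.2 b).choose, ((hbij.2 b).choose_spec).le⟩)
  have htop : Tendsto (fun c => PhiD ψ (v, c)) atTop atTop := by
    refine tendsto_atTop_mono (fun c => PhiD_lb hmono hcont v c) ?_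
    exact hψtop.comp (by simpa [sub_eq_add_neg] using
      tendsto_atTop_add_const_right atTop (-‖v‖) tendsto_id)
  have hbot : Tendsto (fun c => PhiD ψ (v, c)) atBot atBot := by
    refine tendsto_atBot_mono (fun c => PhiD_ub hmono hcont v c) ?_
    exact hψbot.comp (tendsto_atBot_add_const_right atBot (‖v‖) tendsto_id)
  exact ((PhiD_cont hcont).comp (continuous_const.prodMk continuous_id)).surjective htop hbot

/-- Lemma 3.2, Dirichlet case: for every continuous `v` on `[0,1]` there is a
unique constant `c(v)` with `A + ∫₀¹ ψ(∫₀^τ v(s) ds + c(v)) dτ = B`, and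
`v ↦ c(v)` is continuous with respect to the supremum norm. -/
theorem dirichlet_constant_continuous
    (ψ : ℝ → ℝ) (hmono : StrictMono ψ) (hcont : Continuous ψ)
    (hbij : Function.Bijective ψ) (A B : ℝ) :
    ∃ c : C(Set.Icc (0:ℝ) 1, ℝ) → ℝ, Continuous c ∧
      ∀ v : C(Set.Icc (0:ℝ) 1, ℝ),
        (A + ∫ τ in (0:ℝ)..1, ψ ((∫ s in (0:ℝ)..τ, extIcc v s) + c v) = B) ∧
        ∀ c' : ℝ,
          A + ∫ τ in (0:ℝ)..1, ψ ((∫ s in (0:ℝ)..τ, extIcc v s) + c') = B →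
          c' = c v := by
  have hex : ∀ v : C(Set.Icc (0:ℝ) 1, ℝ), ∃ c : ℝ, PhiD ψ (v, c) = B - A :=
    fun v => PhiD_surj hmono hcont hbij v (B - A)
  refine ⟨fun v => (hex v).choose, ?_, ?_⟩
  · -- continuity
    rw [continuous_iff_continuousAt]
    intro v₀
    rw [Metric.continuousAt_iff]
    intro ε hε
    set c₀ := (hex v₀).choose with hc₀
    have hspec₀ : PhiD ψ (v₀, c₀) = B - A := (hex v₀).choose_spec
    have hlt : PhiD ψ (v₀, c₀ - ε/2) < B - A := by
      have := PhiD_strictMono hmono hcont v₀ (show c₀ - ε/2 < c₀ by linarith)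
      simpa [hspec₀] using this
    have hgt : B - A < PhiD ψ (v₀, c₀ + ε/2) := by
      have := PhiD_strictMono hmono hcont v₀ (show c₀ < c₀ + ε/2 by linarith)
      simpa [hspec₀] using this
    have hU : IsOpen {w : C(Set.Icc (0:ℝ) 1, ℝ) |
        PhiD ψ (w, c₀ - ε/2) < B - A ∧ B - A < PhiD ψ (w, c₀ + ε/2)} := by
      apply IsOpen.inter
      · exact isOpen_lt ((PhiD_cont hcont).comp (continuous_id.prodMk continuous_const))
          continuous_const
      · exact isOpen_lt continuous_const
          ((PhiD_cont hcont).comp (continuous_id.prodMk continuous_const))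
    have hmem : v₀ ∈ {w : C(Set.Icc (0:ℝ) 1, ℝ) |
        PhiD ψ (w, c₀ - ε/2) < B - A ∧ B - A < PhiD ψ (w, c₀ + ε/2)} := ⟨hlt, hgt⟩
    obtain ⟨δ, hδ, hball⟩ := Metric.isOpen_iff.1 hU v₀ hmem
    refine ⟨δ, hδ, fun {w} hw => ?_⟩
    obtain ⟨hw1, hw2⟩ := hball hw
    have hspecw : PhiD ψ (w, (hex w).choose) = B - A := (hex w).choose_spec
    have hlt1 : c₀ - ε/2 < (hex w).choose := by
      by_contra hcon
      push_neg at hcon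
      have := (PhiD_strictMono hmono hcont w).monotone hcon
      rw [hspecw] at this
      exact absurd (lt_of_le_of_lt this hw1) (lt_irrefl _)
    have hlt2 : (hex w).choose < c₀ + ε/2 := by
      by_contra hcon
      push_neg at hcon
      have := (PhiD_strictMono hmono hcont w).monotone hcon
      rw [hspecw] at this
      exact absurd (lt_of_lt_of_le hw2 this) (lt_irrefl _)
    rw [Real.dist_eq, abs_sub_lt_iff]
    constructor <;> linarith
  · intro v
    have hspec : PhiD ψ (v, (hex v).choose) = B - A := (hex v).choose_spec
    constructor
    · have : PhiD ψ (v, (hex v).choose) =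
          ∫ τ in (0:ℝ)..1, ψ ((∫ s in (0:ℝ)..τ, extIcc v s) + (hex v).choose) := rfl
      linarith [hspec]
    · intro c' hc'
      have h1 : PhiD ψ (v, c') = B - A := by
        have : PhiD ψ (v, c') =
            ∫ τ in (0:ℝ)..1, ψ ((∫ s in (0:ℝ)..τ, extIcc v s) + c') := rfl
        linarith
      exact (PhiD_strictMono hmono hcont v).injective (by rw [h1, hspec])
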